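/- For all a, b > 0 with a ≠ b, S(a,b) - H(a,b) ≤ (9/5)·(S(a,b) - L(a,b)), where S(a,b) = √((a²+b²)/2), H(a,b) = 2ab/(a+b), and L(a,b) = (b-a)/(ln b - ln a). -/

import Mathlib

open Real Set

lemma log_pade (t : ℝ) (ht : 1 ≤ t) : 3*(t^2-1)/(t^2+4*t+1) ≤ Real.log t := by
  set f : ℝ → ℝ := fun x => Real.log x - 3*(x^2-1)/(x^2+4*x+1) with hf
  have hden : ∀ x : ℝ, 0 < x → (0:ℝ) < x^2+4*x+1 := by intro x hx; nlinarith
  have hD : ∀ x : ℝ, 0 < x → HasDerivAt f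
      (x⁻¹ - ((6*x)*(x^2+4*x+1) - (3*(x^2-1))*(2*x+4))/(x^2+4*x+1)^2) x := by
    intro x hx
    have h1 : HasDerivAt Real.log x⁻¹ x := Real.hasDerivAt_log (ne_of_gt hx)
    have h2 : HasDerivAt (fun x : ℝ => 3*(x^2-1)) (6*x) x := by
      have := (hasDerivAt_pow 2 x).sub_const 1
      have := this.const_mul 3
      exact this.congr_deriv (by ring)
    have h3 : HasDerivAt (fun x : ℝ => x^2+4*x+1) (2*x+4) x := by
      have := ((hasDerivAt_pow 2 x).add ((hasDerivAt_id x).const_mul 4)).add_const 1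
      exact this.congr_deriv (by ring)
    have h4 := h2.div h3 (ne_of_gt (hden x hx))
    exact h1.sub h4
  have hmono : MonotoneOn f (Set.Ici 1) := by
    apply monotoneOn_of_deriv_nonneg (convex_Ici 1)
    · apply ContinuousOn.sub
      · exact Real.continuousOn_log.mono (by intro x hx; simp at hx ⊢; linarith)
      · apply ContinuousOn.div (by fun_prop) (by fun_prop)
        intro x hx
        simp only [Set.mem_Ici] at hx
        exact ne_of_gt (hden x (by linarith))
    · rw [interior_Ici]
      intro x hx
      exact ((hD x (by simp at hx; linarith)).differentiableAt).differentiableWithinAt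
    · rw [interior_Ici]
      intro x hx
      simp only [Set.mem_Ioi] at hx
      have hx0 : (0:ℝ) < x := by linarith
      rw [(hD x hx0).deriv]
      have hd := hden x hx0
      rw [sub_nonneg, inv_eq_one_div, div_le_div_iff₀ (by positivity) hx0]
      nlinarith [sq_nonneg ((x-1)^2)]
  have h1 : f 1 ≤ f t := hmono (by simp) (by simpa using ht) ht
  have hf1 : f 1 = 0 := by simp [hf]
  rw [hf1] at h1
  simpa [hf, sub_nonneg] using h1

lemma carlson {a b : ℝ} (ha : 0 < a) (hab : a < b) :
    (b - a) / (Real.log b - Real.log a) ≤ ((a+b)/2 + 2*Real.sqrt (a*b))/3 := by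
  have hb : 0 < b := lt_trans ha hab
  set u := Real.sqrt a with hu
  set v := Real.sqrt b with hv
  have hu0 : 0 < u := Real.sqrt_pos.mpr ha
  have hv0 : 0 < v := Real.sqrt_pos.mpr hb
  have hua : u^2 = a := Real.sq_sqrt ha.le
  have hvb : v^2 = b := Real.sq_sqrt hb.le
  have huv : u < v := by
    rw [hu, hv]; exact Real.sqrt_lt_sqrt ha.le hab
  have hab' : Real.sqrt (a*b) = u * v := by
    rw [hu, hv, Real.sqrt_mul ha.le]
  set t := v / u with ht
  have ht1 : 1 < t := (one_lt_div hu0).mpr huv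
  have hlogt : Real.log b - Real.log a = 2 * Real.log t := by
    rw [← hua, ← hvb, Real.log_pow, Real.log_pow, ht, Real.log_div (ne_of_gt hv0) (ne_of_gt hu0)]
    push_cast; ring
  have hlt0 : 0 < Real.log t := Real.log_pos ht1
  have hpade := log_pade t ht1.le
  have hv' : v = t * u := by rw [ht, div_mul_cancel₀]; exact ne_of_gt hu0
  have hba : b - a = u^2 * (t^2 - 1) := by rw [← hua, ← hvb, hv']; ring
  have hden : (a+b)/2 + 2*(u*v) = u^2 * (t^2 + 4*t + 1) / 2 := by
    rw [← hua, ← hvb, hv']; ring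
  rw [hlogt, hab', hba, hden]
  rw [div_le_div_iff₀ (by positivity) (by norm_num)]
  have hdpos : (0:ℝ) < t^2+4*t+1 := by nlinarith
  have : 3 * (t^2 - 1) ≤ Real.log t * (t^2+4*t+1) := by
    rw [div_le_iff₀ hdpos] at hpade
    nlinarith
  nlinarith [sq_nonneg u, mul_pos hu0 hu0]

lemma algebra_step {a b : ℝ} (ha : 0 < a) (hb : 0 < b) :
    3*(a+b)/2 + 6*Real.sqrt (a*b) ≤ 4*Real.sqrt ((a^2+b^2)/2) + 10*a*b/(a+b) := by
  set g := Real.sqrt (a*b) with hgdef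
  set q := Real.sqrt ((a^2+b^2)/2) with hqdef
  have hg0 : 0 ≤ g := Real.sqrt_nonneg _
  have hq0 : 0 ≤ q := Real.sqrt_nonneg _
  have hg : g^2 = a*b := Real.sq_sqrt (by positivity)
  have hq : q^2 = (a^2+b^2)/2 := Real.sq_sqrt (by positivity)
  have hs : 0 < a + b := by linarith
  have h2g : 2*g ≤ a + b := by nlinarith [sq_nonneg (a-b)]
  have hg2 : g^4 = (a*b)^2 := by rw [← hg]; ring
  have h23 : 0 ≤ 23*(a+b)^2 + 20*g*(a+b) - 100*g^2 := by nlinarith [mul_nonneg hg0 hs.le]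
  have hpos : 0 < 3*(a+b)^2/2 + 6*g*(a+b) - 10*g^2 := by
    nlinarith [mul_le_mul_of_nonneg_left h2g hg0, mul_nonneg hg0 hs.le]
  have hX : 3*(a+b)^2/2 + 6*g*(a+b) - 10*a*b ≤ 4*q*(a+b) := by
    have hsum : 0 < 4*q*(a+b) + (3*(a+b)^2/2 + 6*g*(a+b) - 10*g^2) := by
      have : 0 ≤ 4*q*(a+b) := by positivity
      linarith
    nlinarith [mul_nonneg (sq_nonneg (a+b-2*g)) h23, hq, hg, hg2, hsum,
      mul_nonneg hq0 hs.le]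
  rw [← mul_le_mul_iff_of_pos_right hs]
  have hrhs : (4*q + 10*a*b/(a+b))*(a+b) = 4*q*(a+b) + 10*(a*b) := by
    field_simp
  rw [hrhs]
  nlinarith [hX]

theorem MSH_le_MSL (a b : ℝ) (ha : 0 < a) (hb : 0 < b) (hab : a ≠ b) :
    Real.sqrt ((a ^ 2 + b ^ 2) / 2) - 2 * a * b / (a + b) ≤
      (9 / 5) * (Real.sqrt ((a ^ 2 + b ^ 2) / 2) -
        (b - a) / (Real.log b - Real.log a)) := by
  have hC : (b - a) / (Real.log b - Real.log a) ≤ ((a+b)/2 + 2*Real.sqrt (a*b))/3 := by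
    rcases lt_or_gt_of_ne hab with h | h
    · exact carlson ha h
    · have := carlson hb h
      rw [mul_comm b a] at this
      have heq : (b - a) / (Real.log b - Real.log a) = (a - b) / (Real.log a - Real.log b) := by
        rw [← neg_sub b a, ← neg_sub (Real.log b), neg_div_neg_eq]
      rw [heq]
      linarith [this]
  have hAlg := algebra_step ha hb
  have h2 : 2*a*b/(a+b) = 10*a*b/(a+b)/5 := by ring
  linarith [hAlg, hC]
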